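/- Let X and A be nonempty finite sets, let P : X × A → (X → ℝ) be a transition kernel (P(x'|x,a) ≥ 0 and Σ_{x'} P(x'|x,a) = 1), and let r : X × A → ℝ with 0 ≤ r(x,a) ≤ 1 for all x, a. Let π be a policy (π(a|x) ≥ 0, Σ_a π(a|x) = 1) with induced transition matrix P^π(x,x') = Σ_a π(a|x)·P(x'|x,a) and induced reward r_π(x) = Σ_a π(a|x)·r(x,a). Let τ > 0 and suppose the contraction condition holds: for any two probability distributions μ, μ' on X, Σ_{x'} |Σ_x (μ(x) − μ'(x))·P^π(x,x')| ≤ exp(−1/τ)·Σ_x |μ(x) − μ'(x)|. Let μ_π be a probability distribution on X stationary for P^π (μ_π P^π = μ_π), set λ = Σ_x μ_π(x)·r_π(x), and define V(x) = Σ_{t=0}^∞ (((P^π)^t r_π)(x) − λ) (the series converges absolutely under the contraction condition) and Q(x,a) = r(x,a) − λ + Σ_{x'} P(x'|x,a)·V(x'). Then |Q(x,a)| ≤ 2τ + 3 for every state-action pair (x, a). -/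
import Mathlib


/-- The average-reward state-action value function of a policy in a fast-mixing
MDP with rewards in [0,1] is bounded by `2τ + 3`. -/
theorem stmt6 (X A : Type*) [Fintype X] [DecidableEq X] [Fintype A]
    [Nonempty X] [Nonempty A]
    -- transition kernel
    (P : X → A → X → ℝ)
    (hPnn : ∀ x a x', 0 ≤ P x a x') (hPsum : ∀ x a, ∑ x', P x a x' = 1)
    -- reward in [0,1]
    (r : X → A → ℝ) (hr0 : ∀ x a, 0 ≤ r x a) (hr1 : ∀ x a, r x a ≤ 1)
    -- policy and its induced transition matrix and reward
    (π : X → A → ℝ)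
    (hπnn : ∀ x a, 0 ≤ π x a) (hπsum : ∀ x, ∑ a, π x a = 1)
    (Pπ : Matrix X X ℝ) (hPπ : ∀ x x', Pπ x x' = ∑ a, π x a * P x a x')
    (rπ : X → ℝ) (hrπ : ∀ x, rπ x = ∑ a, π x a * r x a)
    -- contraction condition with parameter τ
    (τ : ℝ) (hτ : 0 < τ)
    (hcontr : ∀ μ μ' : X → ℝ, (∀ x, 0 ≤ μ x) → (∑ x, μ x = 1) →
      (∀ x, 0 ≤ μ' x) → (∑ x, μ' x = 1) →
      ∑ x', |∑ x, (μ x - μ' x) * Pπ x x'| ≤ Real.exp (-1 / τ) * ∑ x, |μ x - μ' x|)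
    -- stationary distribution and average reward
    (μπ : X → ℝ) (hμnn : ∀ x, 0 ≤ μπ x) (hμsum : ∑ x, μπ x = 1)
    (hstat : ∀ x', ∑ x, μπ x * Pπ x x' = μπ x')
    (lam : ℝ) (hlam : lam = ∑ x, μπ x * rπ x)
    -- value functions
    (V : X → ℝ) (hV : ∀ x, V x = ∑' t : ℕ, ((Pπ ^ t).mulVec rπ x - lam))
    (Q : X → A → ℝ)
    (hQ : ∀ x a, Q x a = r x a - lam + ∑ x', P x a x' * V x') :
    ∀ x a, |Q x a| ≤ 2 * τ + 3 := by
  -- basic facts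
  have hPπnn : ∀ y x', 0 ≤ Pπ y x' := fun y x' => by
    rw [hPπ]; exact Finset.sum_nonneg fun a _ => mul_nonneg (hπnn _ _) (hPnn _ _ _)
  have hPπsum : ∀ y, ∑ x', Pπ y x' = 1 := fun y => by
    calc ∑ x', Pπ y x' = ∑ x', ∑ a, π y a * P y a x' := by simp [hPπ]
    _ = ∑ a, ∑ x', π y a * P y a x' := Finset.sum_comm
    _ = ∑ a, π y a * ∑ x', P y a x' := by simp [Finset.mul_sum]
    _ = 1 := by simp [hPsum, hπsum]
  have hrπ0 : ∀ y, 0 ≤ rπ y := fun y => by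
    rw [hrπ]; exact Finset.sum_nonneg fun a _ => mul_nonneg (hπnn _ _) (hr0 _ _)
  have hrπ1 : ∀ y, rπ y ≤ 1 := fun y => by
    rw [hrπ]
    calc ∑ a, π y a * r y a ≤ ∑ a, π y a * 1 :=
          Finset.sum_le_sum fun a _ => mul_le_mul_of_nonneg_left (hr1 _ _) (hπnn _ _)
    _ = 1 := by simp [hπsum]
  have hlam0 : 0 ≤ lam := by
    rw [hlam]; exact Finset.sum_nonneg fun x _ => mul_nonneg (hμnn _) (hrπ0 _)
  have hlam1 : lam ≤ 1 := by
    rw [hlam]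
    calc ∑ x, μπ x * rπ x ≤ ∑ x, μπ x * 1 :=
          Finset.sum_le_sum fun x _ => mul_le_mul_of_nonneg_left (hrπ1 _) (hμnn _)
    _ = 1 := by simp [hμsum]
  set q := Real.exp (-1 / τ) with hqdef
  have hq0 : 0 ≤ q := (Real.exp_pos _).le
  have hq1 : q < 1 := by
    rw [hqdef]
    calc Real.exp (-1 / τ) < Real.exp 0 :=
          Real.exp_lt_exp.mpr (div_neg_of_neg_of_pos (by norm_num) hτ)
    _ = 1 := Real.exp_zero
  -- powers of Pπ have probability rows
  have hpnn : ∀ t (y x' : X), 0 ≤ (Pπ ^ t) y x' := by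
    intro t
    induction t with
    | zero => intro y x'; simp [Matrix.one_apply]; positivity
    | succ t ih =>
      intro y x'
      rw [pow_succ, Matrix.mul_apply]
      exact Finset.sum_nonneg fun z _ => mul_nonneg (ih y z) (hPπnn z x')
  have hpsum : ∀ t (y : X), ∑ x', (Pπ ^ t) y x' = 1 := by
    intro t
    induction t with
    | zero => intro y; simp [Matrix.one_apply]
    | succ t ih =>
      intro y
      calc ∑ x', (Pπ ^ (t+1)) y x' = ∑ x', ∑ z, (Pπ ^ t) y z * Pπ z x' := by
            simp [pow_succ, Matrix.mul_apply]
      _ = ∑ z, ∑ x', (Pπ ^ t) y z * Pπ z x' := Finset.sum_comm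
      _ = ∑ z, (Pπ ^ t) y z * ∑ x', Pπ z x' := by simp [Finset.mul_sum]
      _ = 1 := by simp [hPπsum, ih]
  -- iterated contraction
  have hl1 : ∀ (y : X) (t : ℕ), ∑ x', |(Pπ ^ t) y x' - μπ x'| ≤ 2 * q ^ t := by
    intro y t
    induction t with
    | zero =>
      calc ∑ x', |(Pπ ^ 0) y x' - μπ x'| ≤ ∑ x', ((Pπ ^ 0) y x' + μπ x') := by
            apply Finset.sum_le_sum
            intro x' _
            have h1 := hpnn 0 y x'
            have h2 := hμnn x'
            rw [abs_sub_le_iff]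
            constructor <;> linarith
      _ = 2 * q ^ 0 := by
            rw [Finset.sum_add_distrib, hpsum 0 y, hμsum]; norm_num
    | succ t ih =>
      have hrw : ∀ x', (Pπ ^ (t+1)) y x' - μπ x' =
          ∑ z, ((Pπ ^ t) y z - μπ z) * Pπ z x' := by
        intro x'
        rw [pow_succ, Matrix.mul_apply]
        simp only [sub_mul, Finset.sum_sub_distrib]
        rw [hstat x']
      calc ∑ x', |(Pπ ^ (t+1)) y x' - μπ x'|
          = ∑ x', |∑ z, ((Pπ ^ t) y z - μπ z) * Pπ z x'| := by
            simp only [hrw]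
      _ ≤ q * ∑ z, |(Pπ ^ t) y z - μπ z| :=
            hcontr _ _ (hpnn t y) (hpsum t y) hμnn hμsum
      _ ≤ q * (2 * q ^ t) := by
            apply mul_le_mul_of_nonneg_left ih hq0
      _ = 2 * q ^ (t+1) := by ring
  -- termwise bound
  have hterm : ∀ (y : X) (t : ℕ), |(Pπ ^ t).mulVec rπ y - lam| ≤ 2 * q ^ t := by
    intro y t
    have heq : (Pπ ^ t).mulVec rπ y - lam = ∑ x', ((Pπ ^ t) y x' - μπ x') * rπ x' := by
      simp only [Matrix.mulVec, dotProduct, hlam, sub_mul, Finset.sum_sub_distrib]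
    rw [heq]
    calc |∑ x', ((Pπ ^ t) y x' - μπ x') * rπ x'|
        ≤ ∑ x', |((Pπ ^ t) y x' - μπ x') * rπ x'| := Finset.abs_sum_le_sum_abs _ _
    _ ≤ ∑ x', |(Pπ ^ t) y x' - μπ x'| := by
          apply Finset.sum_le_sum
          intro x' _
          rw [abs_mul]
          have h1 : |rπ x'| ≤ 1 := abs_le.mpr ⟨by linarith [hrπ0 x'], hrπ1 x'⟩
          calc |(Pπ ^ t) y x' - μπ x'| * |rπ x'| ≤ |(Pπ ^ t) y x' - μπ x'| * 1 :=
                mul_le_mul_of_nonneg_left h1 (abs_nonneg _)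
          _ = _ := mul_one _
    _ ≤ 2 * q ^ t := hl1 y t
  -- geometric series facts
  have hsumgeo : Summable (fun t : ℕ => 2 * q ^ t) :=
    (summable_geometric_of_lt_one hq0 hq1).mul_left 2
  have hVb : ∀ y, |V y| ≤ 2 * τ + 2 := by
    intro y
    have hsumabs : Summable (fun t : ℕ => |(Pπ ^ t).mulVec rπ y - lam|) :=
      Summable.of_nonneg_of_le (fun t => abs_nonneg _) (hterm y) hsumgeo
    have h1 : |V y| ≤ ∑' t : ℕ, |(Pπ ^ t).mulVec rπ y - lam| := by
      rw [hV]
      simpa [Real.norm_eq_abs] using norm_tsum_le_tsum_norm (f := fun t : ℕ =>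
        (Pπ ^ t).mulVec rπ y - lam) (by simpa [Real.norm_eq_abs] using hsumabs)
    have h2 : ∑' t : ℕ, |(Pπ ^ t).mulVec rπ y - lam| ≤ ∑' t : ℕ, 2 * q ^ t :=
      Summable.tsum_le_tsum (hterm y) hsumabs hsumgeo
    have h3 : ∑' t : ℕ, 2 * q ^ t = 2 * (1 - q)⁻¹ := by
      rw [tsum_mul_left, tsum_geometric_of_lt_one hq0 hq1]
    -- bound 2*(1-q)⁻¹ ≤ 2τ+2
    have h1q : 0 < 1 - q := by linarith
    have hτ1 : (0:ℝ) < τ + 1 := by linarith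
    have hexp : 1 / τ + 1 ≤ Real.exp (1 / τ) := Real.add_one_le_exp _
    have hqle : q * (τ + 1) ≤ τ := by
      have hq' : q = (Real.exp (1 / τ))⁻¹ := by
        rw [hqdef, ← Real.exp_neg, neg_div]
      have hepos : (0:ℝ) < 1 / τ + 1 := by positivity
      have h5 : q ≤ (1 / τ + 1)⁻¹ := by
        rw [hq']
        exact inv_anti₀ hepos hexp
      have h6 : (1 / τ + 1)⁻¹ * (τ + 1) ≤ τ ↔ True := by
        rw [iff_true]
        have : (1 / τ + 1) = (τ + 1) / τ := by field_simp; ring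
        rw [this, inv_div, div_mul_cancel₀ _ hτ1.ne']
      have h7 := h6.mpr trivial
      nlinarith [h5, hτ1]
    have h4 : 2 * (1 - q)⁻¹ ≤ 2 * τ + 2 := by
      rw [← div_eq_mul_inv, div_le_iff₀ h1q]
      nlinarith
    linarith
  intro x a
  rw [hQ]
  have hsumPV : |∑ x', P x a x' * V x'| ≤ 2 * τ + 2 := by
    calc |∑ x', P x a x' * V x'| ≤ ∑ x', |P x a x' * V x'| := Finset.abs_sum_le_sum_abs _ _
    _ ≤ ∑ x', P x a x' * (2 * τ + 2) := by
          apply Finset.sum_le_sum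
          intro x' _
          rw [abs_mul, abs_of_nonneg (hPnn x a x')]
          exact mul_le_mul_of_nonneg_left (hVb x') (hPnn x a x')
    _ = 2 * τ + 2 := by rw [← Finset.sum_mul, hPsum, one_mul]
  have hrl : |r x a - lam| ≤ 1 := by
    rw [abs_sub_le_iff]
    constructor <;> [linarith [hr1 x a]; linarith [hr0 x a]]
  calc |r x a - lam + ∑ x', P x a x' * V x'| ≤ |r x a - lam| + |∑ x', P x a x' * V x'| :=
        abs_add_le _ _
  _ ≤ 1 + (2 * τ + 2) := add_le_add hrl hsumPV
  _ = 2 * τ + 3 := by ring
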